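/- Let x₀, …, x_{n−1} ∈ ℍ and suppose that for every choice of values y₀, …, y_{n−1} ∈ ℍ there exist coefficients a₀, …, a_{n−1} ∈ ℍ with Σ_{ℓ=0}^{n−1} a_ℓ·x_m^ℓ = y_m for all m = 0, …, n−1. Then the points x₀, …, x_{n−1} are pairwise distinct and no three of them are automorphically equivalent. -/

import Mathlib

open Quaternion

/-- Two quaternions are automorphically equivalent iff they have the same real part
and the same norm of imaginary part (equivalently, they are conjugate). -/
def AutEquiv (a b : ℍ[ℝ]) : Prop := a.re = b.re ∧ ‖a.im‖ = ‖b.im‖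

lemma sq_id' (t s : ℝ) (a : ℍ[ℝ]) (h1 : a.re = t) (h2 : ‖a.im‖ = s) :
    a * a = (2*t) • a - ((t^2+s^2) : ℝ) • (1 : ℍ[ℝ]) := by
  have him : a.imI^2 + a.imJ^2 + a.imK^2 = s^2 := by
    have : ‖a.im‖ ^ 2 = s ^ 2 := by rw [h2]
    rw [sq, ← Quaternion.normSq_eq_norm_mul_self, Quaternion.normSq_def'] at this
    simpa [sq] using this
  ext <;> simp [Quaternion.re_mul, Quaternion.imI_mul, Quaternion.imJ_mul, Quaternion.imK_mul, h1] <;> nlinarith [him]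

/-- real coefficients for powers on a conjugacy class -/
noncomputable def cd (t s : ℝ) : ℕ → ℝ × ℝ
  | 0 => (1, 0)
  | k+1 => (-(t^2+s^2) * (cd t s k).2, (cd t s k).1 + 2*t*(cd t s k).2)

lemma pow_id (t s : ℝ) (a : ℍ[ℝ]) (h1 : a.re = t) (h2 : ‖a.im‖ = s) (k : ℕ) :
    a ^ k = ((cd t s k).1 : ℝ) • (1 : ℍ[ℝ]) + ((cd t s k).2 : ℝ) • a := by
  induction k with
  | zero => simp [cd]
  | succ k ih =>
    rw [pow_succ, ih]
    have := sq_id' t s a h1 h2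
    simp only [cd]
    rw [add_mul, smul_mul_assoc, smul_mul_assoc, one_mul, this]
    module



/-- If every choice of values can be interpolated at the nodes `x₀, …, x_{n−1}` by a
one-sided quaternion polynomial of degree `< n`, then the nodes are pairwise distinct
and no three of them are automorphically equivalent. -/
theorem onesided_quaternion_interpolation_necessary (n : ℕ) (x : Fin n → ℍ[ℝ])
    (h : ∀ y : Fin n → ℍ[ℝ],
      ∃ a : Fin n → ℍ[ℝ], ∀ m : Fin n, ∑ ℓ : Fin n, a ℓ * (x m) ^ (ℓ : ℕ) = y m) :
    Function.Injective x ∧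
      ∀ l m r : Fin n, l ≠ m → l ≠ r → m ≠ r →
        ¬(AutEquiv (x l) (x m) ∧ AutEquiv (x m) (x r)) := by
  have hinj : Function.Injective x := by
    intro i j hij
    by_contra hne
    obtain ⟨a, ha⟩ := h (fun k => if k = i then 1 else 0)
    have h1 := ha i
    have h2 := ha j
    rw [hij] at h1
    rw [h1] at h2
    simp [hne, Ne.symm hne] at h2
  refine ⟨hinj, ?_⟩
  intro l m r hlm hlr hmr ⟨⟨e1, e2⟩, ⟨e3, e4⟩⟩
  set t := (x l).re
  set s := ‖(x l).im‖
  obtain ⟨a, ha⟩ := h (fun k => if k = l then 1 else 0)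
  have key : ∀ b : ℍ[ℝ], b.re = t → ‖b.im‖ = s →
      ∑ ℓ : Fin n, a ℓ * b ^ (ℓ : ℕ) =
        (∑ ℓ : Fin n, ((cd t s ℓ).1 : ℝ) • a ℓ) +
        (∑ ℓ : Fin n, ((cd t s ℓ).2 : ℝ) • a ℓ) * b := by
    intro b hb1 hb2
    rw [Finset.sum_mul, ← Finset.sum_add_distrib]
    refine Finset.sum_congr rfl fun ℓ _ => ?_
    rw [pow_id t s b hb1 hb2 ℓ]
    rw [mul_add, mul_smul_comm, mul_smul_comm, smul_mul_assoc, mul_one]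
  set A := ∑ ℓ : Fin n, ((cd t s ℓ).1 : ℝ) • a ℓ
  set B := ∑ ℓ : Fin n, ((cd t s ℓ).2 : ℝ) • a ℓ
  have hl := ha l; have hm := ha m; have hr := ha r
  rw [key (x l) rfl rfl] at hl
  rw [key (x m) e1.symm e2.symm] at hm
  rw [key (x r) (e3.symm.trans e1.symm) (e4.symm.trans e2.symm)] at hr
  simp only [if_pos rfl, if_neg (Ne.symm hlm), if_neg (Ne.symm hlr)] at hl hm hr
  have hBmr : B * (x m - x r) = 0 := by
    have : A + B * x m = A + B * x r := hm.trans hr.symm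
    rw [mul_sub, sub_eq_zero]
    exact add_left_cancel this
  have hxmr : x m - x r ≠ 0 := sub_ne_zero.mpr (fun hh => hmr (hinj hh))
  have hB : B = 0 := by
    rcases mul_eq_zero.mp hBmr with h' | h'
    · exact h'
    · exact absurd h' hxmr
  rw [hB, zero_mul, add_zero] at hm hl
  rw [hm] at hl
  exact one_ne_zero hl.symm
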